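/- Let M be a commutative unital C*-algebra, E a faithful conditional expectation on M whose range N = E(M) is finite-dimensional over ℂ, and K ≥ 1 a real number such that K·E − id_M is positive. Then M is finite-dimensional over ℂ and dim_ℂ M ≤ ⌊K⌋ · dim_ℂ N, where ⌊K⌋ denotes the integer part of K. -/

import Mathlib

variable {A : Type*} [CStarAlgebra A] [PartialOrder A] [StarOrderedRing A]

/-- A conditional expectation on a unital C*-algebra `A`: a linear, idempotent, unital,
positive, contractive (norm-one, since `E 1 = 1`) map whose range is a C*-subalgebra
`B = E(A)` (closed under multiplication and star) and which is a `B`-bimodule map. -/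
structure IsCondExp (E : A → A) : Prop where
  map_add : ∀ a b : A, E (a + b) = E a + E b
  map_smul : ∀ (c : ℂ) (a : A), E (c • a) = c • E a
  idem : ∀ a : A, E (E a) = E a
  map_one : E 1 = 1
  pos : ∀ a : A, 0 ≤ a → 0 ≤ E a
  contractive : ∀ a : A, ‖E a‖ ≤ ‖a‖
  range_mul : ∀ a b : A, E (E a * E b) = E a * E b
  range_star : ∀ a : A, E (star (E a)) = star (E a)
  bimod : ∀ a b c : A, E (E b * a * E c) = E b * E a * E c

open WeakDual Module
open scoped ComplexOrder
set_option linter.unusedSectionVars false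

section Aux

variable {M : Type*} [CommCStarAlgebra M] [PartialOrder M] [StarOrderedRing M] [Nontrivial M]

noncomputable def myLift (r : C(characterSpace ℂ M, ℝ)) : M :=
  (gelfandStarTransform M).symm
    (ContinuousMap.comp ⟨Complex.ofReal, Complex.continuous_ofReal⟩ r)

lemma myLift_eval (r : C(characterSpace ℂ M, ℝ)) (x : characterSpace ℂ M) :
    x (myLift r) = (r x : ℂ) := by
  have := gelfandStarTransform_apply_apply M ((gelfandStarTransform M).symm
    (ContinuousMap.comp ⟨Complex.ofReal, Complex.continuous_ofReal⟩ r)) x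
  rw [(gelfandStarTransform M).apply_symm_apply] at this
  simpa [myLift] using this.symm

lemma myLift_nonneg (r : C(characterSpace ℂ M, ℝ)) (hr : (0:C(characterSpace ℂ M, ℝ)) ≤ r) :
    0 ≤ myLift (M := M) r := by
  set s : C(characterSpace ℂ M, ℝ) := ⟨fun x => Real.sqrt (r x), by fun_prop⟩ with hs
  set c : C(characterSpace ℂ M, ℂ) :=
    ContinuousMap.comp ⟨Complex.ofReal, Complex.continuous_ofReal⟩ s with hc
  have key : ContinuousMap.comp ⟨Complex.ofReal, Complex.continuous_ofReal⟩ r = star c * c := by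
    ext x
    have h0 : (0:ℝ) ≤ r x := by
      have := hr; rw [ContinuousMap.le_def] at this; simpa using this x
    simp [hc, hs, ← Complex.ofReal_mul, Real.mul_self_sqrt h0]
  rw [myLift, key, map_mul, map_star]
  exact star_mul_self_nonneg _

lemma myLift_add (r s : C(characterSpace ℂ M, ℝ)) :
    myLift (M := M) (r + s) = myLift r + myLift s := by
  rw [myLift, myLift, myLift, ← map_add]
  congr 1
  ext x
  simp

lemma myLift_one : myLift (M := M) 1 = 1 := by
  rw [myLift]
  have : (ContinuousMap.comp ⟨Complex.ofReal, Complex.continuous_ofReal⟩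
      (1 : C(characterSpace ℂ M, ℝ))) = 1 := by ext x; simp
  rw [this, map_one]

lemma myLift_zero : myLift (M := M) 0 = 0 := by
  have := myLift_add (M := M) 0 0
  rw [add_zero] at this
  exact add_eq_right.mp this.symm

lemma myLift_sum {ι : Type*} (s : Finset ι) (f : ι → C(characterSpace ℂ M, ℝ)) :
    myLift (M := M) (∑ j ∈ s, f j) = ∑ j ∈ s, myLift (f j) := by
  classical
  induction s using Finset.induction_on with
  | empty => simpa using myLift_zero
  | insert _ _ h ih => rw [Finset.sum_insert h, Finset.sum_insert h, myLift_add, ih]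

set_option maxHeartbeats 800000 in
lemma fiber_bound (E : M → M) (hE : IsCondExp E) (K : ℝ) (hK : 1 ≤ K)
    (hpos : ∀ a : M, 0 ≤ a → 0 ≤ K • E a - a)
    (x₀ : characterSpace ℂ M) (t : Finset (characterSpace ℂ M))
    (ht : ∀ x ∈ t, ∀ a : M, x (E a) = x₀ (E a)) :
    (t.card : ℝ) ≤ K := by
  classical
  obtain ⟨U, hU, hUd⟩ := (t.finite_toSet).t2_separation
  have hex : ∀ j : characterSpace ℂ M, ∃ g : C(characterSpace ℂ M, ℝ),
      (∀ x, x ∉ U j → g x = 0) ∧ g j = 1 ∧ ∀ x, g x ∈ Set.Icc (0:ℝ) 1 := by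
    intro j
    obtain ⟨g, h0, h1, hicc⟩ := exists_continuous_zero_one_of_isClosed
      (isClosed_compl_iff.mpr (hU j).2) isClosed_singleton
      (by rw [Set.disjoint_singleton_right]; exact fun h => h (hU j).1)
    exact ⟨g, fun x hx => h0 hx, h1 rfl, hicc⟩
  choose f hf0 hf1 hficc using hex
  have hfnn : ∀ j, (0:C(characterSpace ℂ M, ℝ)) ≤ f j := fun j =>
    ContinuousMap.le_def.mpr fun x => by simpa using (hficc j x).1
  set F : C(characterSpace ℂ M, ℝ) := ∑ j ∈ t, f j with hF
  have hFle : ∀ x, F x ≤ 1 := by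
    intro x
    by_cases hx : ∃ j ∈ t, x ∈ U j
    · obtain ⟨j, hj, hxU⟩ := hx
      have : F x = ∑ k ∈ t, f k x := by simp [hF]
      rw [this, Finset.sum_eq_single_of_mem j hj (fun k hk hkj => by
        refine hf0 k x (fun hxk => ?_)
        exact Set.disjoint_left.mp (hUd hk hj hkj) hxk hxU)]
      exact (hficc j x).2
    · push_neg at hx
      have : F x = ∑ k ∈ t, f k x := by simp [hF]
      rw [this, Finset.sum_eq_zero (fun k hk => hf0 k x (hx k hk))]
      norm_num
  set a : characterSpace ℂ M → M := fun j => myLift (f j) with ha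
  have ha_nn : ∀ j, 0 ≤ a j := fun j => myLift_nonneg _ (hfnn j)
  have hb_nn : 0 ≤ myLift (M := M) (1 - F) := by
    refine myLift_nonneg _ (ContinuousMap.le_def.mpr fun x => ?_)
    simp only [ContinuousMap.zero_apply, ContinuousMap.sub_apply, ContinuousMap.one_apply]
    linarith [hFle x]
  have hb : myLift (M := M) (1 - F) = 1 - ∑ j ∈ t, a j := by
    have h2 := myLift_add (M := M) (1 - F) F
    rw [sub_add_cancel, myLift_one, hF, myLift_sum] at h2
    exact eq_sub_of_add_eq h2.symm
  -- linearity facts for E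
  have hE0 : E 0 = 0 := by
    have := hE.map_smul 0 0; simpa using this
  have hEneg : ∀ m : M, E (-m) = -E m := by
    intro m; have := hE.map_smul (-1) m; simpa using this
  have hEsub : ∀ m n : M, E (m - n) = E m - E n := by
    intro m n; rw [sub_eq_add_neg, hE.map_add, hEneg, ← sub_eq_add_neg]
  have hEsum : ∀ (s : Finset (characterSpace ℂ M)), E (∑ j ∈ s, a j) = ∑ j ∈ s, E (a j) := by
    intro s
    induction s using Finset.induction_on with
    | empty => simpa using hE0
    | insert _ _ h ih => rw [Finset.sum_insert h, Finset.sum_insert h, hE.map_add, ih]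
  -- per-point estimate
  have h1j : ∀ j ∈ t, (1:ℝ) ≤ K * (x₀ (E (a j))).re := by
    intro j hj
    have hpj := hpos (a j) (ha_nn j)
    have hsp : 0 ≤ j (K • E (a j) - a j) :=
      spectrum_nonneg_of_nonneg hpj (WeakDual.CharacterSpace.apply_mem_spectrum j _)
    have hval : j (K • E (a j) - a j) = (K:ℂ) * (x₀ (E (a j))) - 1 := by
      rw [map_sub]
      have hsm : (K • E (a j) : M) = (K:ℂ) • E (a j) := by
        rw [Complex.coe_smul]
      rw [hsm, map_smul, smul_eq_mul, ht j hj, ha]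
      have : j (myLift (f j)) = ((f j) j : ℂ) := myLift_eval _ _
      rw [this, hf1 j]
      norm_num
    rw [hval, Complex.le_def] at hsp
    have h1 := hsp.1
    simp only [Complex.zero_re, Complex.sub_re, Complex.mul_re, Complex.ofReal_re,
      Complex.ofReal_im, Complex.one_re, zero_mul, sub_zero] at h1
    linarith
  -- total estimate
  have htot : ∑ j ∈ t, (x₀ (E (a j))).re ≤ 1 := by
    have h0 : 0 ≤ E (myLift (M := M) (1 - F)) := hE.pos _ hb_nn
    have hsp : 0 ≤ x₀ (E (myLift (M := M) (1 - F))) :=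
      spectrum_nonneg_of_nonneg h0 (WeakDual.CharacterSpace.apply_mem_spectrum x₀ _)
    have hval : x₀ (E (myLift (M := M) (1 - F))) = 1 - ∑ j ∈ t, x₀ (E (a j)) := by
      rw [hb, hEsub, hE.map_one, hEsum, map_sub, map_one, map_sum]
    rw [hval, Complex.le_def] at hsp
    have h1 := hsp.1
    rw [Complex.sub_re, Complex.one_re, Complex.re_sum] at h1
    simpa using h1
  calc (t.card : ℝ) = ∑ _j ∈ t, (1:ℝ) := by simp
    _ ≤ ∑ j ∈ t, K * (x₀ (E (a j))).re := Finset.sum_le_sum h1j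
    _ = K * ∑ j ∈ t, (x₀ (E (a j))).re := by rw [Finset.mul_sum]
    _ ≤ K * 1 := mul_le_mul_of_nonneg_left htot (by linarith)
    _ = K := mul_one K

noncomputable def rangeSubalg (E : M → M) (hE : IsCondExp E) : Subalgebra ℂ M where
  carrier := Set.range E
  mul_mem' := by rintro _ _ ⟨a, rfl⟩ ⟨b, rfl⟩; exact ⟨E a * E b, hE.range_mul a b⟩
  add_mem' := by rintro _ _ ⟨a, rfl⟩ ⟨b, rfl⟩; exact ⟨a + b, hE.map_add a b⟩
  one_mem' := ⟨1, hE.map_one⟩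
  zero_mem' := ⟨0, by have := hE.map_smul 0 0; simpa using this⟩
  algebraMap_mem' := fun c =>
    ⟨c • 1, by rw [hE.map_smul, hE.map_one, Algebra.algebraMap_eq_smul_one]⟩

end Aux

set_option maxHeartbeats 1000000 in
theorem condexp_findim_range_implies_findim_commutative
    {M : Type*} [CommCStarAlgebra M] [PartialOrder M] [StarOrderedRing M]
    (E : M → M) (hE : IsCondExp E)
    (hfaith : ∀ a : M, E (star a * a) = 0 → a = 0)
    (hfin : FiniteDimensional ℂ ↥(Submodule.span ℂ (Set.range E)))
    (K : ℝ) (hK : 1 ≤ K)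
    (hpos : ∀ a : M, 0 ≤ a → 0 ≤ K • E a - a) :
    FiniteDimensional ℂ M ∧
      (Module.finrank ℂ M : ℝ) ≤
        (⌊K⌋ : ℝ) * (Module.finrank ℂ ↥(Submodule.span ℂ (Set.range E)) : ℝ) := by
  classical
  have hfl1 : (1:ℤ) ≤ ⌊K⌋ := Int.le_floor.mpr (by exact_mod_cast hK)
  have hfl0 : (0:ℤ) ≤ ⌊K⌋ := by linarith
  by_cases hM : Subsingleton M
  · constructor
    · haveI : Finite M := Finite.of_subsingleton
      exact Module.Finite.of_finite (R := ℂ)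
    · rw [Module.finrank_zero_of_subsingleton]
      have : (0:ℝ) ≤ (⌊K⌋ : ℝ) := by exact_mod_cast hfl0
      exact_mod_cast mul_nonneg this (Nat.cast_nonneg _)
  haveI hnt : Nontrivial M := not_subsingleton_iff_nontrivial.mp hM
  set X := characterSpace ℂ M with hX
  set N' := rangeSubalg E hE with hN'
  have hspan : Submodule.span ℂ (Set.range E) = Subalgebra.toSubmodule N' :=
    le_antisymm (Submodule.span_le.mpr fun x hx => hx) (fun x hx => Submodule.subset_span hx)
  have e1 : ↥(Submodule.span ℂ (Set.range E)) ≃ₗ[ℂ] ↥N' :=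
    (LinearEquiv.ofEq _ _ hspan).trans N'.toSubmoduleEquiv
  haveI hfdN : FiniteDimensional ℂ ↥N' := Module.Finite.equiv e1
  set n := Module.finrank ℂ ↥N' with hn
  have hn' : Module.finrank ℂ ↥(Submodule.span ℂ (Set.range E)) = n := e1.finrank_eq
  -- characters restricted to the range subalgebra
  set ρ : X → (↥N' →* ℂ) := fun x =>
    { toFun := fun b => x (b : M)
      map_one' := by simpa using map_one x
      map_mul' := fun b c => by simpa using map_mul x (b : M) (c : M) } with hρ
  set L : X → Module.Dual ℂ ↥N' := fun x =>
    ((x : WeakDual ℂ M) : M →ₗ[ℂ] ℂ).comp (N'.val.toLinearMap) with hL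
  have hLρ : ∀ x : X, ⇑(L x) = ⇑(ρ x) := fun x => rfl
  set S := Set.range ρ with hS
  have hvS : LinearIndependent ℂ (fun g : S => ⇑(g : ↥N' →* ℂ)) :=
    (linearIndependent_monoidHom ↥N' ℂ).comp Subtype.val Subtype.val_injective
  set w : S → Module.Dual ℂ ↥N' := fun g => L (g.2.choose) with hw
  have hw_comp : (⇑(LinearMap.ltoFun ℂ ↥N' ℂ ℂ) ∘ w) = (fun g : S => ⇑(g : ↥N' →* ℂ)) := by
    funext g
    show ⇑(L (g.2.choose)) = _
    rw [hLρ, g.2.choose_spec]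
  have hwli : LinearIndependent ℂ w :=
    LinearIndependent.of_comp (LinearMap.ltoFun ℂ ↥N' ℂ ℂ) (by rw [hw_comp]; exact hvS)
  haveI : Finite S := hwli.finite
  haveI : Fintype S := Fintype.ofFinite S
  have hScard : Fintype.card S ≤ n :=
    le_trans hwli.fintype_card_le_finrank (le_of_eq Subspace.dual_finrank_eq)
  set k := ⌊K⌋.toNat with hk
  -- fiber bound in Finset form
  have hfibcard : ∀ s : S, ∀ t : Finset X, (∀ x ∈ t, ρ x = (s : ↥N' →* ℂ)) → t.card ≤ k := by
    intro s t hts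
    have hx₀ := s.2.choose_spec
    have hcard : (t.card : ℝ) ≤ K := by
      refine fiber_bound E hE K hK hpos s.2.choose t ?_
      intro x hx a
      have hxx : ρ x = ρ s.2.choose := (hts x hx).trans hx₀.symm
      have := DFunLike.congr_fun hxx (⟨E a, ⟨a, rfl⟩⟩ : ↥N')
      simpa [hρ] using this
    have : (t.card : ℤ) ≤ ⌊K⌋ := Int.le_floor.mpr (by exact_mod_cast hcard)
    omega
  -- each fiber is finite with cardinality ≤ k
  have hfs : ∀ s : S, {x : X | ρ x = (s : ↥N' →* ℂ)}.Finite := by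
    intro s
    by_contra hinf
    obtain ⟨t, hts, htc⟩ := (show Set.Infinite _ from hinf).exists_subset_card_eq (k + 1)
    have := hfibcard s t (fun x hx => hts hx)
    omega
  -- X is finite
  have huniv : (Set.univ : Set X) = ⋃ s : S, {x : X | ρ x = (s : ↥N' →* ℂ)} := by
    ext x
    simp only [Set.mem_univ, Set.mem_iUnion, Set.mem_setOf_eq, true_iff]
    exact ⟨⟨ρ x, Set.mem_range_self x⟩, rfl⟩
  haveI : Finite X := by
    rw [← Set.finite_univ_iff]
    rw [huniv]
    exact Set.finite_iUnion hfs
  haveI : Fintype X := Fintype.ofFinite X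
  -- counting
  have hcardX : Fintype.card X ≤ n * k := by
    have hq : ∀ x : X, (⟨ρ x, Set.mem_range_self x⟩ : S) ∈ (Finset.univ : Finset S) :=
      fun x => Finset.mem_univ _
    have := Finset.card_eq_sum_card_fiberwise
      (f := fun x : X => (⟨ρ x, Set.mem_range_self x⟩ : S))
      (s := Finset.univ) (t := Finset.univ) (fun x _ => Finset.mem_univ _)
    rw [Finset.card_univ] at this
    rw [this]
    calc ∑ s ∈ (Finset.univ : Finset S),
          (Finset.univ.filter fun x : X => (⟨ρ x, Set.mem_range_self x⟩ : S) = s).card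
        ≤ ∑ _s ∈ (Finset.univ : Finset S), k := by
          refine Finset.sum_le_sum fun s _ => ?_
          refine hfibcard s _ fun x hx => ?_
          have := (Finset.mem_filter.mp hx).2
          exact congrArg Subtype.val this
      _ = Fintype.card S * k := by rw [Finset.sum_const, Finset.card_univ, smul_eq_mul]
      _ ≤ n * k := Nat.mul_le_mul_right k hScard
  -- M is linearly equivalent to functions on X
  haveI : DiscreteTopology X := inferInstance
  have eG : M ≃ₗ[ℂ] C(X, ℂ) :=
    { toFun := gelfandStarTransform M
      invFun := (gelfandStarTransform M).symm
      left_inv := (gelfandStarTransform M).symm_apply_apply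
      right_inv := (gelfandStarTransform M).apply_symm_apply
      map_add' := map_add _
      map_smul' := map_smul _ }
  have eC : C(X, ℂ) ≃ₗ[ℂ] (X → ℂ) :=
    { ContinuousMap.equivFnOfDiscrete (α := X) (β := ℂ) with
      map_add' := fun f g => rfl
      map_smul' := fun c f => rfl }
  have e : M ≃ₗ[ℂ] (X → ℂ) := eG.trans eC
  haveI hMfd : FiniteDimensional ℂ M := Module.Finite.equiv e.symm
  have hrM : Module.finrank ℂ M = Fintype.card X := by
    rw [e.finrank_eq, Module.finrank_pi]
  refine ⟨hMfd, ?_⟩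
  rw [hrM, hn']
  have hkk : (k : ℝ) = (⌊K⌋ : ℝ) := by
    exact_mod_cast congrArg (fun z : ℤ => (z : ℝ)) (Int.toNat_of_nonneg hfl0)
  have : (Fintype.card X : ℝ) ≤ (n : ℝ) * (k : ℝ) := by exact_mod_cast hcardX
  rw [hkk] at this
  linarith
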